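/- If a Banach space X has the L-Dunford-Pettis property, then every complemented closed subspace of X has the L-Dunford-Pettis property. -/

import Mathlib

open Filter Topology Metric

noncomputable section

instance : Fact ((1:ENNReal) ≤ ⊤) := ⟨le_top⟩

/-- A sequence is weakly null if every continuous linear functional sends it to a null
sequence. -/
def WeaklyNull {X : Type*} [NormedAddCommGroup X] [NormedSpace ℝ X] (x : ℕ → X) : Prop :=
  ∀ f : X →L[ℝ] ℝ, Tendsto (fun n => f (x n)) atTop (𝓝 0)

/-- A sequence of functionals is weak*-null if it tends to zero pointwise. -/
def WeakStarNull {X : Type*} [NormedAddCommGroup X] [NormedSpace ℝ X]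
    (f : ℕ → X →L[ℝ] ℝ) : Prop :=
  ∀ x : X, Tendsto (fun n => f n x) atTop (𝓝 0)

/-- A norm bounded set is a Dunford-Pettis set if every weakly null sequence of functionals
converges to zero uniformly on it. -/
def IsDPSet {X : Type*} [NormedAddCommGroup X] [NormedSpace ℝ X] (A : Set X) : Prop :=
  Bornology.IsBounded A ∧
  ∀ f : ℕ → X →L[ℝ] ℝ, WeaklyNull f →
    Tendsto (fun n => ⨆ x : A, |f n (x : X)|) atTop (𝓝 0)

/-- A norm bounded subset of the dual is an L-set if every weakly null sequence in `X`
converges to zero uniformly on it. -/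
def IsLSet {X : Type*} [NormedAddCommGroup X] [NormedSpace ℝ X]
    (A : Set (X →L[ℝ] ℝ)) : Prop :=
  Bornology.IsBounded A ∧
  ∀ x : ℕ → X, WeaklyNull x →
    Tendsto (fun n => ⨆ f : A, |(f : X →L[ℝ] ℝ) (x n)|) atTop (𝓝 0)

/-- A norm bounded subset of the dual is an L-Dunford-Pettis set if every weakly null
sequence in `X` which is a Dunford-Pettis set converges to zero uniformly on it. -/
def IsLDPSet {X : Type*} [NormedAddCommGroup X] [NormedSpace ℝ X]
    (A : Set (X →L[ℝ] ℝ)) : Prop :=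
  Bornology.IsBounded A ∧
  ∀ x : ℕ → X, WeaklyNull x → IsDPSet (Set.range x) →
    Tendsto (fun n => ⨆ f : A, |(f : X →L[ℝ] ℝ) (x n)|) atTop (𝓝 0)

/-- A set is relatively weakly compact if its closure in the weak topology is compact. -/
def RelWeaklyCompact {X : Type*} [NormedAddCommGroup X] [NormedSpace ℝ X]
    (A : Set X) : Prop :=
  IsCompact (closure ((toWeakSpace ℝ X) '' A))

/-- The relatively compact Dunford-Pettis property: every Dunford-Pettis set is
relatively norm compact. -/
def HasDPrcP (X : Type*) [NormedAddCommGroup X] [NormedSpace ℝ X] : Prop :=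
  ∀ A : Set X, IsDPSet A → IsCompact (closure A)

/-- An operator is Dunford-Pettis completely continuous if it maps weakly null sequences
that are Dunford-Pettis sets to norm null sequences. -/
def IsDPcc {X Y : Type*} [NormedAddCommGroup X] [NormedSpace ℝ X]
    [NormedAddCommGroup Y] [NormedSpace ℝ Y] (T : X →L[ℝ] Y) : Prop :=
  ∀ x : ℕ → X, WeaklyNull x → IsDPSet (Set.range x) →
    Tendsto (fun n => ‖T (x n)‖) atTop (𝓝 0)

/-- An operator is weakly compact if the image of the closed unit ball is relatively
weakly compact. -/
def IsWeaklyCompactOp {X Y : Type*} [NormedAddCommGroup X] [NormedSpace ℝ X]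
    [NormedAddCommGroup Y] [NormedSpace ℝ Y] (T : X →L[ℝ] Y) : Prop :=
  RelWeaklyCompact (T '' closedBall 0 1)

/-- The L-Dunford-Pettis property: every L-Dunford-Pettis set in the dual is relatively
weakly compact. -/
def HasLDPProperty (X : Type*) [NormedAddCommGroup X] [NormedSpace ℝ X] : Prop :=
  ∀ A : Set (X →L[ℝ] ℝ), IsLDPSet A → RelWeaklyCompact A

/-- The Dunford-Pettis property: every relatively weakly compact set is a
Dunford-Pettis set. -/
def HasDPProperty (X : Type*) [NormedAddCommGroup X] [NormedSpace ℝ X] : Prop :=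
  ∀ A : Set X, RelWeaklyCompact A → IsDPSet A

/-- Grothendieck space: every weak*-null sequence in the dual is weakly null. -/
def IsGrothendieck (X : Type*) [NormedAddCommGroup X] [NormedSpace ℝ X] : Prop :=
  ∀ f : ℕ → X →L[ℝ] ℝ, WeakStarNull f → WeaklyNull f

/-- The space `ℓ∞` of bounded real sequences. -/
abbrev ellInfty : Type := lp (fun _ : ℕ => ℝ) ⊤


section Aux

lemma iSup_comp_surj {α β : Type*} (s : α → β) (hs : Function.Surjective s) (F : β → ℝ) :
    (⨆ a, F (s a)) = ⨆ b, F b := by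
  rw [iSup, iSup]
  congr 1
  rw [← Function.comp_def, Set.range_comp, hs.range_eq, Set.image_univ]

lemma weakSpace_t2 (D : Type*) [NormedAddCommGroup D] [NormedSpace ℝ D] :
    T2Space (WeakSpace ℝ D) := by
  refine ⟨fun x y hxy => ?_⟩
  obtain ⟨f, hf⟩ := SeparatingDual.exists_separating_of_ne (R := ℝ) (V := D)
    (show (toWeakSpace ℝ D).symm x ≠ (toWeakSpace ℝ D).symm y by
      simpa using (toWeakSpace ℝ D).symm.injective.ne hxy)
  have hcont : Continuous fun z : WeakSpace ℝ D => f ((toWeakSpace ℝ D).symm z) :=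
    WeakBilin.eval_continuous ((topDualPairing ℝ D).flip) f
  exact separated_by_continuous hcont hf

end Aux

set_option maxHeartbeats 2000000 in
theorem stmt16 {X : Type*} [NormedAddCommGroup X] [NormedSpace ℝ X] [CompleteSpace X]
    (hX : HasLDPProperty X) (X₁ : Submodule ℝ X) (hcl : IsClosed (X₁ : Set X))
    (hcompl : ∃ P : X →L[ℝ] X, LinearMap.range (P : X →ₗ[ℝ] X) = X₁ ∧ ∀ x ∈ X₁, P x = x) :
    HasLDPProperty X₁ := by
  obtain ⟨P, hPrange, hPid⟩ := hcompl
  have hmem : ∀ x, P x ∈ X₁ := fun x => hPrange ▸ LinearMap.mem_range_self _ x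
  let Pc : X →L[ℝ] X₁ := P.codRestrict X₁ hmem
  let e : (X₁ →L[ℝ] ℝ) →L[ℝ] (X →L[ℝ] ℝ) := (ContinuousLinearMap.compL ℝ X X₁ ℝ).flip Pc
  let r : (X →L[ℝ] ℝ) →L[ℝ] (X₁ →L[ℝ] ℝ) := (ContinuousLinearMap.compL ℝ X₁ X ℝ).flip X₁.subtypeL
  have he_apply : ∀ (g : X₁ →L[ℝ] ℝ) (x : X), e g x = g (Pc x) := by
    intro g x
    simp [e, ContinuousLinearMap.compL_apply]
  have hre : ∀ g : X₁ →L[ℝ] ℝ, r (e g) = g := by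
    intro g
    ext z
    have : Pc (z : X) = z := Subtype.ext (by simpa [Pc] using hPid z z.2)
    simp [r, ContinuousLinearMap.compL_apply, he_apply, this]
  intro A hA
  -- B := e '' A is an L-DP set in X'
  have hB : IsLDPSet (e '' A) := by
    constructor
    · exact e.lipschitz.isBounded_image hA.1
    · intro x hx hDPx
      -- the sequence Pc ∘ x in X₁
      set y : ℕ → X₁ := fun n => Pc (x n) with hy
      have hy_wn : WeaklyNull y := by
        intro φ
        have := hx (e φ)
        simpa [he_apply] using this
      have hy_dp : IsDPSet (Set.range y) := by
        constructor
        · have : Set.range y = Pc '' Set.range x := by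
            rw [← Set.range_comp]; rfl
          rw [this]
          exact Pc.lipschitz.isBounded_image hDPx.1
        · intro f hf
          have hef : WeaklyNull (fun k => e (f k)) := by
            intro G
            exact hf (G.comp e)
          have hS := hDPx.2 (fun k => e (f k)) hef
          obtain ⟨C, hC⟩ := isBounded_iff_forall_norm_le.1 hDPx.1
          refine squeeze_zero (fun k => Real.iSup_nonneg fun z => abs_nonneg _)
            (fun k => ?_) hS
          refine Real.iSup_le (fun z => ?_) (Real.iSup_nonneg fun z => abs_nonneg _)
          obtain ⟨z, hz⟩ := z
          obtain ⟨m, hm⟩ := hz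
          have hbdd : BddAbove (Set.range fun w : Set.range x => |e (f k) (w : X)|) := by
            refine ⟨‖e (f k)‖ * C, ?_⟩
            rintro _ ⟨⟨w, hw⟩, rfl⟩
            calc |e (f k) w| ≤ ‖e (f k)‖ * ‖w‖ := by
                  simpa using (e (f k)).le_opNorm w
              _ ≤ ‖e (f k)‖ * C :=
                  mul_le_mul_of_nonneg_left (hC w hw) (norm_nonneg _)
          have : |f k z| = |e (f k) (x m)| := by
            rw [he_apply, ← hm]
          rw [this]
          exact le_ciSup hbdd (⟨x m, Set.mem_range_self m⟩ : Set.range x)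
      -- conclude using the L-DP property of A
      have hmain := hA.2 y hy_wn hy_dp
      have hEq : ∀ n, (⨆ f : (e '' A), |(f : X →L[ℝ] ℝ) (x n)|)
          = ⨆ g : A, |(g : X₁ →L[ℝ] ℝ) (y n)| := by
        intro n
        have hsurj : Function.Surjective
            (fun g : A => (⟨e g, ⟨g, g.2, rfl⟩⟩ : (e '' A : Set _))) := by
          rintro ⟨-, g, hg, rfl⟩
          exact ⟨⟨g, hg⟩, rfl⟩
        have := iSup_comp_surj _ hsurj (fun f : (e '' A : Set _) => |(f : X →L[ℝ] ℝ) (x n)|)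
        rw [← this]
        simp only [he_apply]
        rfl
      simpa only [hEq] using hmain
  have hBw := hX _ hB
  -- pull back the weak compactness through r
  have ht2 : T2Space (WeakSpace ℝ (X₁ →L[ℝ] ℝ)) := weakSpace_t2 (X₁ →L[ℝ] ℝ)
  unfold RelWeaklyCompact at hBw ⊢
  set W := toWeakSpace ℝ (X →L[ℝ] ℝ)
  set W₁ := toWeakSpace ℝ (X₁ →L[ℝ] ℝ)
  have hK : IsCompact ((WeakSpace.map r) '' closure (W '' (e '' A))) :=
    hBw.image (WeakSpace.map r).continuous
  have hsub : W₁ '' A ⊆ (WeakSpace.map r) '' closure (W '' (e '' A)) := by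
    rintro - ⟨g, hg, rfl⟩
    refine ⟨W (e g), subset_closure ⟨e g, ⟨g, hg, rfl⟩, rfl⟩, ?_⟩
    show WeakSpace.map r (W (e g)) = W₁ g
    have h1 : WeakSpace.map r (W (e g)) = W₁ (r (e g)) := rfl
    rw [h1, hre]
  exact hK.of_isClosed_subset isClosed_closure (closure_minimal hsub hK.isClosed)
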